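/- For complex numbers z and ν with Re(z) > 0 and Re(z - ν) > 0, the Mellin transform of x ↦ x^{-ν} Γ(ν, x) equals Γ(z)/(z - ν), i.e., ∫₀^∞ x^{-ν} Γ(ν, x) x^{z-1} dx = Γ(z)/(z - ν). -/

import Mathlib

/-- Upper incomplete gamma function `Γ(a, x) = ∫_x^∞ t^(a-1) e^(-t) dt`,
realized as an integral along the ray `x + t`, `t ∈ (0, ∞)`. -/
noncomputable def uGamma (a x : ℂ) : ℂ :=
  ∫ t in Set.Ioi (0:ℝ), (x + (t:ℂ)) ^ (a - 1) * Complex.exp (-(x + (t:ℂ)))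

open MeasureTheory Set Complex Filter

-- shift map: measure preserving, embedding
lemma shift_integrableOn {E : Type*} [NormedAddCommGroup E] {f : ℝ → E} :
    IntegrableOn (fun s => f (1 + s)) (Ioi (0:ℝ)) ↔ IntegrableOn f (Ioi (1:ℝ)) := by
  have h := (measurePreserving_add_left (volume : Measure ℝ) 1).integrableOn_comp_preimage
    (MeasurableEquiv.addLeft (1:ℝ)).measurableEmbedding (f := f) (s := Ioi (1:ℝ))
  simpa [preimage_const_add_Ioi, Function.comp_def] using h

lemma shift_integral {E : Type*} [NormedAddCommGroup E] [NormedSpace ℝ E] (f : ℝ → E) :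
    ∫ s in Ioi (0:ℝ), f (1 + s) = ∫ u in Ioi (1:ℝ), f u := by
  have h := (measurePreserving_add_left (volume : Measure ℝ) 1).setIntegral_preimage_emb
    (MeasurableEquiv.addLeft (1:ℝ)).measurableEmbedding f (Ioi (1:ℝ))
  simpa [preimage_const_add_Ioi] using h

lemma helper1 {z : ℂ} (hz : 0 < z.re) {r : ℝ} (hr : 0 < r) :
    IntegrableOn (fun x : ℝ => (x:ℂ) ^ (z - 1) * Complex.exp (-((r * x : ℝ) : ℂ))) (Ioi 0) := by
  have h0 : IntegrableOn (fun x : ℝ => Complex.exp (-((x:ℝ):ℂ)) * (x:ℂ) ^ (z - 1)) (Ioi 0) := by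
    refine (Complex.GammaIntegral_convergent hz).congr_fun (fun x _ => ?_) measurableSet_Ioi
    push_cast
    rfl
  have h1 : IntegrableOn
      (fun x : ℝ => Complex.exp (-((r * x : ℝ) : ℂ)) * ((r * x : ℝ) : ℂ) ^ (z - 1)) (Ioi 0) := by
    have := (integrableOn_Ioi_comp_mul_left_iff
      (fun x : ℝ => Complex.exp (-((x:ℝ):ℂ)) * (x:ℂ) ^ (z - 1)) 0 hr).mpr
    rw [mul_zero] at this
    exact this h0
  have hrc : ((r:ℂ)) ^ (z - 1) ≠ 0 := by
    simp [Complex.cpow_eq_zero_iff, Complex.ofReal_ne_zero, hr.ne']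
  have h2 : IntegrableOn
      (fun x : ℝ => ((r:ℂ) ^ (z - 1))⁻¹ *
        (Complex.exp (-((r * x : ℝ) : ℂ)) * ((r * x : ℝ) : ℂ) ^ (z - 1))) (Ioi 0) :=
    h1.const_mul _
  refine h2.congr_fun (fun x hx => ?_) measurableSet_Ioi
  rw [mem_Ioi] at hx
  push_cast
  rw [mul_cpow_ofReal_nonneg hr.le hx.le]
  field_simp

lemma stepA {ν z : ℂ} {x : ℝ} (hx : 0 < x) :
    (x:ℂ) ^ (-ν) * uGamma ν (x:ℂ) * (x:ℂ) ^ (z - 1)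
      = ∫ s in Ioi (0:ℝ), (x:ℂ) ^ (z - 1) * ((1 + s : ℝ) : ℂ) ^ (ν - 1)
          * Complex.exp (-(((1 + s) * x : ℝ) : ℂ)) := by
  have hx0 : (x:ℂ) ≠ 0 := Complex.ofReal_ne_zero.mpr hx.ne'
  have hsub' : (∫ s in Ioi (0:ℝ), ((x:ℂ) + ((x * s : ℝ) : ℂ)) ^ (ν - 1)
        * Complex.exp (-((x:ℂ) + ((x * s : ℝ) : ℂ))))
      = x⁻¹ • ∫ t in Ioi (0:ℝ), ((x:ℂ) + (t:ℂ)) ^ (ν - 1)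
        * Complex.exp (-((x:ℂ) + (t:ℂ))) := by
    have hsub := integral_comp_mul_left_Ioi
      (fun t : ℝ => ((x:ℂ) + (t:ℂ)) ^ (ν - 1) * Complex.exp (-((x:ℂ) + (t:ℂ)))) 0 hx
    rw [mul_zero] at hsub
    exact hsub
  have hu : uGamma ν (x:ℝ) = (x:ℂ) *
      ∫ s in Ioi (0:ℝ), ((x:ℂ) + ((x * s : ℝ) : ℂ)) ^ (ν - 1)
        * Complex.exp (-((x:ℂ) + ((x * s : ℝ) : ℂ))) := by
    rw [uGamma, hsub', Complex.real_smul, ← mul_assoc, ← Complex.ofReal_mul,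
      mul_inv_cancel₀ hx.ne', Complex.ofReal_one, one_mul]
  have hinner : (∫ s in Ioi (0:ℝ), ((x:ℂ) + ((x * s : ℝ) : ℂ)) ^ (ν - 1)
        * Complex.exp (-((x:ℂ) + ((x * s : ℝ) : ℂ))))
      = (x:ℂ) ^ (ν - 1) * ∫ s in Ioi (0:ℝ), ((1 + s : ℝ) : ℂ) ^ (ν - 1)
        * Complex.exp (-(((1 + s) * x : ℝ) : ℂ)) := by
    rw [← integral_const_mul]
    refine setIntegral_congr_fun measurableSet_Ioi (fun s hs => ?_)
    rw [mem_Ioi] at hs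
    have h1 : ((x:ℂ) + ((x * s : ℝ) : ℂ)) = (((1 + s) * x : ℝ) : ℂ) := by push_cast; ring
    rw [h1]
    have h2 : (((1 + s) * x : ℝ) : ℂ) ^ (ν - 1)
        = ((1 + s : ℝ) : ℂ) ^ (ν - 1) * (x:ℂ) ^ (ν - 1) := by
      rw [Complex.ofReal_mul, mul_cpow_ofReal_nonneg (by positivity) hx.le]
    rw [h2]; ring
  have hone : (x:ℂ) ^ (-ν) * (x:ℂ) * (x:ℂ) ^ (ν - 1) = 1 := by
    nth_rewrite 2 [← Complex.cpow_one (x:ℂ)]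
    rw [← Complex.cpow_add _ _ hx0, ← Complex.cpow_add _ _ hx0,
      show -ν + 1 + (ν - 1) = 0 by ring, Complex.cpow_zero]
  rw [hu, hinner]
  set J := ∫ s in Ioi (0:ℝ), ((1 + s : ℝ) : ℂ) ^ (ν - 1)
      * Complex.exp (-(((1 + s) * x : ℝ) : ℂ)) with hJ
  have key : (x:ℂ) ^ (-ν) * ((x:ℂ) * ((x:ℂ) ^ (ν - 1) * J)) * (x:ℂ) ^ (z - 1)
      = (x:ℂ) ^ (z - 1) * J := by
    calc (x:ℂ) ^ (-ν) * ((x:ℂ) * ((x:ℂ) ^ (ν - 1) * J)) * (x:ℂ) ^ (z - 1)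
        = ((x:ℂ) ^ (-ν) * (x:ℂ) * (x:ℂ) ^ (ν - 1)) * ((x:ℂ) ^ (z - 1) * J) := by ring
      _ = (x:ℂ) ^ (z - 1) * J := by rw [hone, one_mul]
  rw [key, hJ, ← integral_const_mul]
  exact setIntegral_congr_fun measurableSet_Ioi (fun s _ => by ring)

lemma hFub {z ν : ℂ} (hz : 0 < z.re) (hzν : 0 < (z - ν).re) :
    Integrable (Function.uncurry fun (x s : ℝ) => (x:ℂ) ^ (z - 1) * ((1 + s : ℝ) : ℂ) ^ (ν - 1)
        * Complex.exp (-(((1 + s) * x : ℝ) : ℂ)))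
      ((volume.restrict (Ioi 0)).prod (volume.restrict (Ioi 0))) := by
  have hmeas : AEStronglyMeasurable
      (Function.uncurry fun (x s : ℝ) => (x:ℂ) ^ (z - 1) * ((1 + s : ℝ) : ℂ) ^ (ν - 1)
        * Complex.exp (-(((1 + s) * x : ℝ) : ℂ)))
      ((volume.restrict (Ioi 0)).prod (volume.restrict (Ioi 0))) := by
    rw [Measure.prod_restrict]
    refine ContinuousOn.aestronglyMeasurable ?_ (measurableSet_Ioi.prod measurableSet_Ioi)
    refine continuousOn_of_forall_continuousAt (fun p hp => ?_)
    obtain ⟨hp1, hp2⟩ := hp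
    simp only [mem_Ioi] at hp1 hp2
    have c1 : ContinuousAt (fun p : ℝ × ℝ => ((p.1 : ℝ) : ℂ) ^ (z - 1)) p :=
      (continuousAt_ofReal_cpow_const _ _ (Or.inr hp1.ne')).comp continuousAt_fst
    have c2 : ContinuousAt (fun p : ℝ × ℝ => ((1 + p.2 : ℝ) : ℂ) ^ (ν - 1)) p := by
      have : (0:ℝ) < 1 + p.2 := by linarith
      have h4 : Continuous (fun p : ℝ × ℝ => (1:ℝ) + p.2) := by fun_prop
      exact ContinuousAt.comp (x := p)
        (continuousAt_ofReal_cpow_const _ _ (Or.inr this.ne')) h4.continuousAt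
    have c3 : ContinuousAt
        (fun p : ℝ × ℝ => Complex.exp (-(((1 + p.2) * p.1 : ℝ) : ℂ))) p := by
      apply Continuous.continuousAt
      exact Complex.continuous_exp.comp ((Complex.continuous_ofReal.comp
        (((continuous_const.add continuous_snd).mul continuous_fst))).neg)
    exact ((c1.mul c2).mul c3)
  rw [integrable_prod_iff' hmeas]
  constructor
  · filter_upwards [ae_restrict_mem measurableSet_Ioi] with s hs
    have hr : (0:ℝ) < 1 + s := by have := mem_Ioi.mp hs; linarith
    have h1 : IntegrableOn (fun x : ℝ => ((1 + s : ℝ) : ℂ) ^ (ν - 1) *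
        ((x:ℂ) ^ (z - 1) * Complex.exp (-(((1 + s) * x : ℝ) : ℂ)))) (Ioi 0) :=
      (helper1 hz hr).const_mul _
    exact h1.congr_fun (fun x _ => by simp only [Function.uncurry]; ring) measurableSet_Ioi
  · have hp : ν.re - z.re - 1 < -1 := by
      have : 0 < z.re - ν.re := by simpa [Complex.sub_re] using hzν
      linarith
    have hint : IntegrableOn (fun s : ℝ => Real.Gamma z.re * (1 + s) ^ (ν.re - z.re - 1))
        (Ioi 0) :=
      (shift_integrableOn.mpr (integrableOn_Ioi_rpow_of_lt hp one_pos)).const_mul _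
    refine hint.congr_fun (fun s hs => ?_) measurableSet_Ioi
    have hs' : (0:ℝ) < s := mem_Ioi.mp hs
    have hr : (0:ℝ) < 1 + s := by linarith
    have hnorm : ∀ x ∈ Ioi (0:ℝ),
        ((1 + s) ^ (ν.re - 1) * (x ^ (z.re - 1) * Real.exp (-((1 + s) * x))))
          = ‖(x:ℂ) ^ (z - 1) * ((1 + s : ℝ) : ℂ) ^ (ν - 1)
              * Complex.exp (-(((1 + s) * x : ℝ) : ℂ))‖ := by
      intro x hx
      rw [mem_Ioi] at hx
      rw [norm_mul, norm_mul,
        Complex.norm_cpow_eq_rpow_re_of_pos hx, Complex.norm_cpow_eq_rpow_re_of_pos hr,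
        Complex.norm_exp]
      simp [Complex.sub_re]
      ring
    have hcalc : (∫ x in Ioi (0:ℝ), ‖(x:ℂ) ^ (z - 1) * ((1 + s : ℝ) : ℂ) ^ (ν - 1)
          * Complex.exp (-(((1 + s) * x : ℝ) : ℂ))‖)
        = (1 + s) ^ (ν.re - 1) * ((1 / (1 + s)) ^ z.re * Real.Gamma z.re) := by
      rw [← setIntegral_congr_fun measurableSet_Ioi hnorm, integral_const_mul,
        Real.integral_rpow_mul_exp_neg_mul_Ioi hz hr]
    simp only [Function.uncurry] at hcalc ⊢
    rw [hcalc, one_div, Real.inv_rpow hr.le, ← Real.rpow_neg hr.le]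
    have key : (1 + s : ℝ) ^ (ν.re - 1) * (1 + s) ^ (-z.re) = (1 + s) ^ (ν.re - z.re - 1) := by
      rw [← Real.rpow_add hr, show ν.re - 1 + -z.re = ν.re - z.re - 1 from by ring]
    linear_combination (-Real.Gamma z.re) * key

theorem stmt_0 (z ν : ℂ) (hz : 0 < z.re) (hzν : 0 < (z - ν).re) :
    ∫ x in Set.Ioi (0:ℝ), (x:ℂ) ^ (-ν) * uGamma ν (x:ℂ) * (x:ℂ) ^ (z - 1)
      = Complex.Gamma z / (z - ν) := by
  have hswap := integral_integral_swap (hFub hz hzν)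
  calc ∫ x in Set.Ioi (0:ℝ), (x:ℂ) ^ (-ν) * uGamma ν (x:ℂ) * (x:ℂ) ^ (z - 1)
      = ∫ x in Ioi (0:ℝ), ∫ s in Ioi (0:ℝ), (x:ℂ) ^ (z - 1) * ((1 + s : ℝ) : ℂ) ^ (ν - 1)
          * Complex.exp (-(((1 + s) * x : ℝ) : ℂ)) :=
        setIntegral_congr_fun measurableSet_Ioi (fun x hx => stepA (mem_Ioi.mp hx))
    _ = ∫ s in Ioi (0:ℝ), ∫ x in Ioi (0:ℝ), (x:ℂ) ^ (z - 1) * ((1 + s : ℝ) : ℂ) ^ (ν - 1)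
          * Complex.exp (-(((1 + s) * x : ℝ) : ℂ)) := hswap
    _ = ∫ s in Ioi (0:ℝ), Complex.Gamma z * ((1 + s : ℝ) : ℂ) ^ (ν - z - 1) := by
        refine setIntegral_congr_fun measurableSet_Ioi (fun s hs => ?_)
        have hs' : (0:ℝ) < s := mem_Ioi.mp hs
        have hr : (0:ℝ) < 1 + s := by linarith
        have hr0 : ((1 + s : ℝ) : ℂ) ≠ 0 := Complex.ofReal_ne_zero.mpr hr.ne'
        have hfe : (fun x : ℝ => (x:ℂ) ^ (z - 1) * ((1 + s : ℝ) : ℂ) ^ (ν - 1)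
              * Complex.exp (-(((1 + s) * x : ℝ) : ℂ)))
            = fun x : ℝ => ((1 + s : ℝ) : ℂ) ^ (ν - 1)
              * ((x:ℂ) ^ (z - 1) * Complex.exp (-(((1 + s : ℝ) : ℂ) * (x:ℂ)))) := by
          funext x; push_cast; ring
        rw [hfe, integral_const_mul, integral_cpow_mul_exp_neg_mul_Ioi hz hr]
        have harg : ((1 + s : ℝ) : ℂ).arg ≠ Real.pi := by
          rw [Complex.arg_ofReal_of_nonneg hr.le]
          exact Real.pi_ne_zero.symm
        rw [show (1 : ℂ) / ((1 + s : ℝ) : ℂ) = (((1 + s : ℝ) : ℂ))⁻¹ from one_div _,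
          Complex.inv_cpow _ _ harg, ← Complex.cpow_neg, ← mul_assoc,
          ← Complex.cpow_add _ _ hr0, show ν - 1 + -z = ν - z - 1 from by ring]
        ring
    _ = Complex.Gamma z * ∫ s in Ioi (0:ℝ), ((1 + s : ℝ) : ℂ) ^ (ν - z - 1) :=
        integral_const_mul _ _
    _ = Complex.Gamma z / (z - ν) := by
        have hre : (ν - z - 1).re < -1 := by
          have : 0 < z.re - ν.re := by simpa [Complex.sub_re] using hzν
          simp only [Complex.sub_re, Complex.one_re]
          linarith
        have hshift := shift_integral (fun u : ℝ => (u:ℂ) ^ (ν - z - 1))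
        rw [hshift, integral_Ioi_cpow_of_lt hre one_pos]
        have hzν0 : z - ν ≠ 0 := by
          intro h
          rw [h] at hzν
          simp at hzν
        rw [Complex.ofReal_one, Complex.one_cpow, show ν - z - 1 + 1 = -(z - ν) from by ring]
        field_simp
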